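/- If B ⊆ 2^ω is a Borel set and there exists a perfect set P ⊆ 2^ω such that the translates B + x, x ∈ P, are pairwise disjoint, then B has Haar measure zero (i.e., measure zero with respect to the product of the uniform measures on ZMod 2) and B is meager in 2^ω. Consequently, the σ-ideal I₀ generated by such sets is a proper (non-trivial) ideal. -/

import Mathlib

open Set MeasureTheory TopologicalSpace

/-- The Cantor group `2^ω`: functions `ℕ → ZMod 2` with the product topology and
coordinatewise addition modulo 2. -/
abbrev CantorSp : Type := ℕ → ZMod 2

/-- The translate `B + x` of a set `B ⊆ 2^ω` by `x ∈ 2^ω`. -/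
def cTranslate (B : Set CantorSp) (x : CantorSp) : Set CantorSp := (fun b => b + x) '' B

/-- The Haar probability measure of the Cantor group, i.e. the product of the uniform
measures on `ZMod 2`. -/
noncomputable def cantorHaar : Measure CantorSp :=
  Measure.addHaarMeasure (⊤ : PositiveCompacts CantorSp)

/-- `F₀` : Borel sets `B ⊆ 2^ω` admitting a perfect (nonempty, closed, without
isolated points) set `P` of translations making `{B + x : x ∈ P}` disjoint. -/
def memF0 (B : Set CantorSp) : Prop :=
  MeasurableSet[borel CantorSp] B ∧
    ∃ P : Set CantorSp, Perfect P ∧ P.Nonempty ∧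
      P.Pairwise fun x y => Disjoint (cTranslate B x) (cTranslate B y)

/-- `I₀`, the σ-ideal generated by `F₀`: `E ∈ I₀` iff `E` is contained in a countable
union of members of `F₀`. -/
def memI0 (E : Set CantorSp) : Prop :=
  ∃ f : ℕ → Set CantorSp, (∀ n, memF0 (f n)) ∧ E ⊆ ⋃ n, f n


section Aux

lemma cantor_add_self (x : CantorSp) : x + x = 0 := by
  funext i
  have h : ∀ a : ZMod 2, a + a = 0 := by decide
  exact h _

lemma cTranslate_eq_preimage (B : Set CantorSp) (x : CantorSp) :
    cTranslate B x = (fun z => z + x) ⁻¹' B := by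
  ext z
  constructor
  · rintro ⟨b, hb, rfl⟩
    simpa [add_assoc, cantor_add_self] using hb
  · intro hz
    exact ⟨z + x, hz, by simp [add_assoc, cantor_add_self]⟩

lemma isMeagre_union {X : Type*} [TopologicalSpace X] {s t : Set X}
    (hs : IsMeagre s) (ht : IsMeagre t) : IsMeagre (s ∪ t) := by
  rw [IsMeagre, Set.compl_union]
  exact Filter.inter_mem hs ht

lemma not_isMeagre_of_isOpen' {X : Type*} [TopologicalSpace X] [BaireSpace X]
    {s : Set X} (hs : IsOpen s) (hne : s.Nonempty) : ¬ IsMeagre s := by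
  intro h
  have hd : Dense sᶜ := dense_of_mem_residual h
  obtain ⟨x, hx1, hx2⟩ := hd.inter_open_nonempty s hs hne
  exact hx2 hx1

lemma perfect_infinite {P : Set CantorSp} (hP : Perfect P) (hne : P.Nonempty) :
    P.Infinite := by
  intro hfin
  obtain ⟨x₀, hx₀⟩ := hne
  have hacc := hP.acc x₀ hx₀
  rw [accPt_iff_nhds] at hacc
  have hFc : IsClosed (P \ {x₀}) := (hfin.subset Set.diff_subset).isClosed
  have hmem : (P \ {x₀})ᶜ ∈ nhds x₀ := hFc.isOpen_compl.mem_nhds (by simp)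
  obtain ⟨y, ⟨hy1, hy2⟩, hy3⟩ := hacc _ hmem
  exact hy1 ⟨hy2, hy3⟩

lemma key_lemma (B : Set CantorSp) (hB : MeasurableSet B)
    (P : Set CantorSp) (hP : Perfect P) (hne : P.Nonempty)
    (hdisj : P.Pairwise fun x y => Disjoint (cTranslate B x) (cTranslate B y)) :
    cantorHaar B = 0 ∧ IsMeagre B := by
  -- the key disjointness fact, translated to the identity
  have hBt : ∀ x ∈ P, ∀ y ∈ P, x ≠ y → ∀ z, z ∈ B → z + (x + y) ∈ B → False := by
    intro x hx y hy hxy z hz hz'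
    have h1 : z + x ∈ cTranslate B x := ⟨z, hz, rfl⟩
    have h2 : z + x ∈ cTranslate B y := by
      refine ⟨z + (x + y), hz', ?_⟩
      calc z + (x + y) + y = z + x + (y + y) := by abel
      _ = z + x := by rw [cantor_add_self, add_zero]
    exact (Set.disjoint_left.1 (hdisj hx hy hxy)) h1 h2
  constructor
  · -- measure zero
    haveI hH : cantorHaar.IsAddHaarMeasure :=
      MeasureTheory.Measure.isAddHaarMeasure_addHaarMeasure _
    have e : ℕ ↪ P := (perfect_infinite hP hne).natEmbedding
    set f : ℕ → Set CantorSp := fun n => cTranslate B (e n) with hf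
    have hmeas : ∀ n, MeasurableSet (f n) := by
      intro n
      simp only [hf, cTranslate_eq_preimage]
      exact hB.preimage (by fun_prop)
    have hpd : Pairwise (Function.onFun Disjoint f) := by
      intro m n hmn
      exact hdisj (e m).2 (e n).2 (fun h => hmn (e.injective (Subtype.ext h)))
    have hsum : cantorHaar (⋃ n, f n) = ∑' (n : ℕ), cantorHaar B := by
      rw [MeasureTheory.measure_iUnion hpd hmeas]
      congr 1
      funext n
      simp only [hf, cTranslate_eq_preimage]
      exact MeasureTheory.measure_preimage_add_right _ _ _
    by_contra h0
    have htop : (∑' (_ : ℕ), cantorHaar B) = ⊤ :=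
      ENNReal.tsum_const_eq_top_of_ne_zero h0
    have hle : cantorHaar (⋃ n, f n) ≤ cantorHaar Set.univ :=
      MeasureTheory.measure_mono (Set.subset_univ _)
    have huniv : cantorHaar Set.univ = 1 := by
      have := MeasureTheory.Measure.addHaarMeasure_self
        (K₀ := (⊤ : TopologicalSpace.PositiveCompacts CantorSp))
      simpa [cantorHaar] using this
    rw [hsum, htop, huniv] at hle
    exact (by simp at hle)
  · -- meager
    by_contra hmeag
    obtain ⟨U, hUopen, hBU⟩ := hB.baireMeasurableSet.residualEq_isOpen
    -- U \ B is meager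
    have hUB : IsMeagre (U \ B) := by
      rw [IsMeagre]
      filter_upwards [hBU] with x hx
      intro hxm
      exact hxm.2 ((iff_of_eq hx).2 hxm.1)
    -- U is nonempty (else B is meager)
    rcases Set.eq_empty_or_nonempty U with rfl | ⟨a, ha⟩
    · apply hmeag
      rw [IsMeagre]
      filter_upwards [hBU] with x hx
      intro hxB
      exact absurd ((iff_of_eq hx).1 hxB) (Set.notMem_empty x)
    obtain ⟨I, u, hu, hsub⟩ := isOpen_pi_iff.1 hUopen a ha
    set V : Set CantorSp := (I : Set ℕ).pi (fun i => {a i}) with hV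
    have hVU : V ⊆ U := by
      intro z hz
      apply hsub
      intro i hi
      have := hz i hi
      simp only [Set.mem_singleton_iff] at this
      rw [this]
      exact (hu i hi).2
    have hVopen : IsOpen V := isOpen_set_pi I.finite_toSet
      (fun i hi => isOpen_discrete _)
    have hVne : V.Nonempty := ⟨a, fun i _ => rfl⟩
    -- pick two close points of P
    obtain ⟨x₀, hx₀⟩ := hne
    have hacc := accPt_iff_nhds.1 (hP.acc x₀ hx₀)
    have hWopen : IsOpen ((I : Set ℕ).pi (fun i => ({x₀ i} : Set (ZMod 2)))) :=
      isOpen_set_pi I.finite_toSet (fun i hi => isOpen_discrete _)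
    obtain ⟨y, ⟨hyW, hyP⟩, hyx⟩ := hacc _ (hWopen.mem_nhds (fun i _ => rfl))
    set t : CantorSp := x₀ + y with ht
    have htI : ∀ i ∈ I, t i = 0 := by
      intro i hi
      have := hyW i hi
      simp only [Set.mem_singleton_iff] at this
      have h2 : ∀ a : ZMod 2, a + a = 0 := by decide
      simp [ht, Pi.add_apply, this, h2]
    have hVt : ∀ z, z ∈ V → z + t ∈ V := by
      intro z hz i hi
      have := hz i hi
      simp only [Set.mem_singleton_iff] at this ⊢
      simp [Pi.add_apply, htI i hi, this]
    -- B ∩ (B translated by t) is empty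
    have hdisjt : ∀ z, z ∈ B → z + t ∈ B → False :=
      fun z => hBt x₀ hx₀ y hyP (fun h => hyx h.symm) z
    -- V is covered by two meager sets
    have hcover : V ⊆ (U \ B) ∪ ((fun z => z + t) ⁻¹' (U \ B)) := by
      intro z hz
      by_cases hzB : z ∈ B
      · right
        refine ⟨hVU (hVt z hz), ?_⟩
        intro hc
        exact hdisjt z hzB hc
      · left
        exact ⟨hVU hz, hzB⟩
    have hmeagV : IsMeagre V :=
      (isMeagre_union hUB (hUB.preimage_of_isOpenMap (by fun_prop)
        (Homeomorph.addRight t).isOpenMap)).mono hcover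
    exact not_isMeagre_of_isOpen' hVopen hVne hmeagV

end Aux

/-- Every Borel set `B ⊆ 2^ω` with a perfect set of translations making its translates
pairwise disjoint has Haar measure zero and is meager; consequently the σ-ideal `I₀`
generated by such sets is proper. -/

theorem stmt5 :
    (∀ B : Set CantorSp, MeasurableSet[borel CantorSp] B →
      (∃ P : Set CantorSp, Perfect P ∧ P.Nonempty ∧
        P.Pairwise fun x y => Disjoint (cTranslate B x) (cTranslate B y)) →
      cantorHaar B = 0 ∧ IsMeagre B) ∧
    ¬ memI0 (Set.univ : Set CantorSp) := by
  have hb : borel CantorSp = (inferInstance : MeasurableSpace CantorSp) :=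
    BorelSpace.measurable_eq.symm
  have main : ∀ B : Set CantorSp, MeasurableSet[borel CantorSp] B →
      (∃ P : Set CantorSp, Perfect P ∧ P.Nonempty ∧
        P.Pairwise fun x y => Disjoint (cTranslate B x) (cTranslate B y)) →
      cantorHaar B = 0 ∧ IsMeagre B := by
    intro B hB ⟨P, hP, hne, hdisj⟩
    exact key_lemma B (by rwa [hb] at hB) P hP hne hdisj
  refine ⟨main, ?_⟩
  rintro ⟨f, hf, hcov⟩
  have hnull : ∀ n, cantorHaar (f n) = 0 := fun n =>
    (main (f n) (hf n).1 (hf n).2).1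
  have h1 : cantorHaar Set.univ = 1 := by
    have := MeasureTheory.Measure.addHaarMeasure_self
      (K₀ := (⊤ : TopologicalSpace.PositiveCompacts CantorSp))
    simpa [cantorHaar] using this
  have : cantorHaar Set.univ ≤ ∑' n, cantorHaar (f n) :=
    le_trans (measure_mono hcov) (measure_iUnion_le _)
  simp [hnull, h1] at this
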